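/- Let k be a number field, f ∈ k[t] a nonconstant squarefree polynomial whose degree is odd or divisible by 6, and E the elliptic curve over k(t) given by Y² = X³ + f(t). Given a point (X₀(t), Y₀(t)) ∈ E(k(t)), there exists a finite set S of places of k containing the archimedean places such that for every t ∈ k and every choice y_t of a square root of f(t), the fractional O_{k(y_t),S}-ideal generated by y_t − Y₀(t) is the cube of a fractional O_{k(y_t),S}-ideal. -/

import Mathlib

open IsDedekindDomain NumberField Polynomial
open Multiplicative
open scoped Classical

namespace Scube
open IsDedekindDomain NumberField Polynomial Multiplicative
open scoped Classical





noncomputable section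

variable {k L : Type*} [Field k] [Field L]

/-- the finset of nonzero coefficients -/
def cfs (P : Polynomial k) : Finset k := P.support.image P.coeff

lemma mem_cfs {P : Polynomial k} {i : ℕ} (h : P.coeff i ≠ 0) : P.coeff i ∈ cfs P := by
  rw [cfs]
  exact Finset.mem_image.2 ⟨i, Polynomial.mem_support_iff.2 h, rfl⟩

lemma cfs_reflect_subset (N : ℕ) (P : Polynomial k) : cfs (Polynomial.reflect N P) ⊆ cfs P := by
  intro x hx
  rw [cfs] at hx
  obtain ⟨i, hi, rfl⟩ := Finset.mem_image.1 hx
  rw [Polynomial.mem_support_iff] at hi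
  rw [Polynomial.coeff_reflect] at hi ⊢
  exact mem_cfs hi

lemma zm_exists {x : WithZero (Multiplicative ℤ)} (hx : x ≠ 0) :
    ∃ m : ℤ, x = ((Multiplicative.ofAdd m : Multiplicative ℤ) : WithZero (Multiplicative ℤ)) :=
  ⟨Multiplicative.toAdd (WithZero.unzero hx), by simp [WithZero.coe_unzero]⟩

lemma zm_pow (m : ℤ) (n : ℕ) :
    ((Multiplicative.ofAdd m : Multiplicative ℤ) : WithZero (Multiplicative ℤ)) ^ n
      = ((Multiplicative.ofAdd ((n : ℤ) * m) : Multiplicative ℤ) : WithZero (Multiplicative ℤ)) := by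
  rw [← WithZero.coe_pow, WithZero.coe_inj, ← ofAdd_nsmul]
  norm_num

lemma zm_mul (m m' : ℤ) :
    ((Multiplicative.ofAdd m : Multiplicative ℤ) : WithZero (Multiplicative ℤ)) *
      ((Multiplicative.ofAdd m' : Multiplicative ℤ) : WithZero (Multiplicative ℤ))
      = ((Multiplicative.ofAdd (m + m') : Multiplicative ℤ) : WithZero (Multiplicative ℤ)) := by
  rw [← WithZero.coe_mul, WithZero.coe_inj, ← ofAdd_add]

lemma zm_inj {m m' : ℤ}
    (h : ((Multiplicative.ofAdd m : Multiplicative ℤ) : WithZero (Multiplicative ℤ))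
      = ((Multiplicative.ofAdd m' : Multiplicative ℤ) : WithZero (Multiplicative ℤ))) : m = m' := by
  rw [WithZero.coe_inj] at h
  exact congrArg Multiplicative.toAdd h

lemma zm_div (m m' : ℤ) :
    ((Multiplicative.ofAdd m : Multiplicative ℤ) : WithZero (Multiplicative ℤ)) /
      ((Multiplicative.ofAdd m' : Multiplicative ℤ) : WithZero (Multiplicative ℤ))
      = ((Multiplicative.ofAdd (m - m') : Multiplicative ℤ) : WithZero (Multiplicative ℤ)) := by
  rw [← WithZero.coe_div, WithZero.coe_inj, ← ofAdd_sub]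

lemma zm_ne_zero (m : ℤ) :
    ((Multiplicative.ofAdd m : Multiplicative ℤ) : WithZero (Multiplicative ℤ)) ≠ 0 :=
  WithZero.coe_ne_zero

section Val

variable (v : Valuation L (WithZero (Multiplicative ℤ))) (ι : k →+* L)

lemma sq_le_one {a : WithZero (Multiplicative ℤ)} (h : a * a ≤ 1) : a ≤ 1 := by
  rcases le_or_gt a 1 with h1 | h1
  · exact h1
  · calc a = a * 1 := (mul_one a).symm
      _ ≤ a * a := mul_le_mul_right h1.le a
      _ ≤ 1 := h

lemma lt_one_or {a b : WithZero (Multiplicative ℤ)} (ha : a ≤ 1) (hb : b ≤ 1)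
    (h : a * b < 1) : a < 1 ∨ b < 1 := by
  by_contra hc
  push_neg at hc
  rw [le_antisymm ha hc.1, le_antisymm hb hc.2, one_mul] at h
  exact lt_irrefl _ h

lemma cube_lt_one {a : WithZero (Multiplicative ℤ)} (ha : a ≤ 1) (h : a ^ 3 < 1) : a < 1 := by
  rcases ha.lt_or_eq with h1 | h1
  · exact h1
  · rw [h1, one_pow] at h; exact absurd h (lt_irrefl _)

lemma val_eval₂_le_one {P : Polynomial k} {z : L}
    (hP : ∀ i, P.coeff i ≠ 0 → v (ι (P.coeff i)) = 1) (hz : v z ≤ 1) :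
    v (P.eval₂ ι z) ≤ 1 := by
  rw [Polynomial.eval₂_eq_sum, Polynomial.sum_def]
  refine Valuation.map_sum_le v ?_
  intro i hi
  rw [Polynomial.mem_support_iff] at hi
  rw [v.map_mul, hP i hi, one_mul, v.map_pow]
  exact pow_le_one' hz i

lemma val_eval₂_eq_one {P : Polynomial k} {z : L}
    (hP : ∀ i, P.coeff i ≠ 0 → v (ι (P.coeff i)) = 1)
    (h0 : v (ι (P.coeff 0)) = 1) (hz : v z < 1) :
    v (P.eval₂ ι z) = 1 := by
  conv_lhs => rw [← P.divX_mul_X_add]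
  rw [Polynomial.eval₂_add, Polynomial.eval₂_mul, Polynomial.eval₂_X, Polynomial.eval₂_C]
  rw [Valuation.map_add_eq_of_lt_right, h0]
  rw [h0, v.map_mul]
  calc v (P.divX.eval₂ ι z) * v z ≤ 1 * v z := by
        refine mul_le_mul_left ?_ _
        refine val_eval₂_le_one v ι (fun i hi => ?_) hz.le
        rw [Polynomial.coeff_divX] at hi ⊢
        exact hP _ hi
    _ = v z := one_mul _
    _ < 1 := hz

end Val

end






lemma stepA {k : Type*} [Field k] (f : Polynomial k) (X₀ Y₀ : RatFunc k)
    (hpt : Y₀ ^ 2 = X₀ ^ 3 + algebraMap (Polynomial k) (RatFunc k) f) :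
    ∃ A B C : Polynomial k, B ≠ 0 ∧ Y₀.num = C ∧ Y₀.denom = B ^ 3 ∧
      IsCoprime A B ∧ IsCoprime C B ∧ C ^ 2 = A ^ 3 + f * B ^ 6 := by
  set ιp := algebraMap (Polynomial k) (RatFunc k) with hιp
  have hXd : ιp X₀.denom ≠ 0 := RatFunc.algebraMap_ne_zero X₀.denom_ne_zero
  have hYd : ιp Y₀.denom ≠ 0 := RatFunc.algebraMap_ne_zero Y₀.denom_ne_zero
  have hXn : ιp X₀.num = X₀ * ιp X₀.denom := (div_eq_iff hXd).1 (RatFunc.num_div_denom X₀)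
  have hYn : ιp Y₀.num = Y₀ * ιp Y₀.denom := (div_eq_iff hYd).1 (RatFunc.num_div_denom Y₀)
  have h1 : Y₀.num ^ 2 * X₀.denom ^ 3
      = X₀.num ^ 3 * Y₀.denom ^ 2 + f * X₀.denom ^ 3 * Y₀.denom ^ 2 := by
    apply RatFunc.algebraMap_injective
    simp only [map_add, map_mul, map_pow, ← hιp, hXn, hYn]
    linear_combination (ιp X₀.denom) ^ 3 * (ιp Y₀.denom) ^ 2 * hpt
  have hd1 : Y₀.denom ^ 2 ∣ X₀.denom ^ 3 := by
    refine (((RatFunc.isCoprime_num_denom Y₀).symm).pow (n := 2) (m := 2)).dvd_of_dvd_mul_right (y := X₀.denom ^ 3) ?_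
    exact ⟨X₀.num ^ 3 + f * X₀.denom ^ 3, by linear_combination h1⟩
  have hd2 : X₀.denom ^ 3 ∣ Y₀.denom ^ 2 := by
    refine (((RatFunc.isCoprime_num_denom X₀).symm).pow (n := 3) (m := 3)).dvd_of_dvd_mul_right (y := Y₀.denom ^ 2) ?_
    exact ⟨Y₀.num ^ 2 - f * Y₀.denom ^ 2, by linear_combination -h1⟩
  have hBxBy : X₀.denom ^ 3 = Y₀.denom ^ 2 :=
    Polynomial.eq_of_monic_of_associated ((X₀.monic_denom).pow 3) ((Y₀.monic_denom).pow 2)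
      (associated_of_dvd_dvd hd2 hd1)
  set bb : RatFunc k := ιp Y₀.denom / ιp X₀.denom with hbb
  have hbb2 : bb ^ 2 = ιp X₀.denom := by
    rw [hbb, div_pow, div_eq_iff (pow_ne_zero _ hXd), ← map_pow, ← hBxBy, map_pow]
    ring
  have hint : IsIntegral (Polynomial k) bb := by
    refine ⟨Polynomial.X ^ 2 - Polynomial.C X₀.denom,
      Polynomial.monic_X_pow_sub_C _ (by norm_num), ?_⟩
    simp only [eval₂_sub, eval₂_X_pow, eval₂_C, hbb2, ← hιp, sub_self]
  obtain ⟨B, hB⟩ := IsIntegrallyClosed.isIntegral_iff.1 hint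
  have hB2 : B ^ 2 = X₀.denom := by
    apply RatFunc.algebraMap_injective
    rw [map_pow]; rw [← hιp] at hB ⊢; rw [hB, hbb2]
  have hB3 : B ^ 3 = Y₀.denom := by
    apply RatFunc.algebraMap_injective
    rw [map_pow]; rw [← hιp] at hB ⊢; rw [hB]
    rw [show bb ^ 3 = bb ^ 2 * bb from by ring, hbb2, hbb]
    field_simp
  have hBne : B ≠ 0 := by
    intro h
    exact Y₀.denom_ne_zero (by rw [← hB3, h]; ring)
  have hCB : IsCoprime Y₀.num B := by
    have h := Y₀.isCoprime_num_denom
    rw [← hB3] at h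
    exact h.of_isCoprime_of_dvd_right ⟨B ^ 2, by ring⟩
  have hAB : IsCoprime X₀.num B := by
    have h := X₀.isCoprime_num_denom
    rw [← hB2] at h
    exact h.of_isCoprime_of_dvd_right ⟨B, by ring⟩
  refine ⟨X₀.num, B, Y₀.num, hBne, rfl, hB3.symm, hAB, hCB, ?_⟩
  have h6 : (B ^ 6 : Polynomial k) ≠ 0 := pow_ne_zero _ hBne
  apply mul_right_cancel₀ h6
  rw [← hB2, ← hB3] at h1
  linear_combination h1

lemma C_ne_zero {k : Type*} [Field k] {A B C f : Polynomial k}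
    (hid : C ^ 2 = A ^ 3 + f * B ^ 6) (hAB : IsCoprime A B)
    (hsf : Squarefree f) (hf : 0 < f.natDegree) : C ≠ 0 := by
  intro hC0
  rw [hC0] at hid
  have hdvd : B ^ 6 ∣ A ^ 3 := ⟨-f, by linear_combination -hid⟩
  have hunit : IsUnit (B ^ 6) := (hAB.symm.pow : IsCoprime (B ^ 6) (A ^ 3)).isUnit_of_dvd' dvd_rfl hdvd
  have hdvd2 : A * A ∣ f * B ^ 6 := by
    refine Dvd.dvd.trans ?_ (⟨-1, by linear_combination -hid⟩ : A ^ 3 ∣ f * B ^ 6)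
    exact ⟨A, by ring⟩
  have hAf : A * A ∣ f := (hunit.dvd_mul_right).1 hdvd2
  have hAu : IsUnit A := hsf A hAf
  have : IsUnit (f * B ^ 6) := by
    have : IsUnit (-(A ^ 3)) := (hAu.pow 3).neg
    rwa [show -(A ^ 3) = f * B ^ 6 from by linear_combination hid] at this
  have hfu : IsUnit f := isUnit_of_mul_isUnit_left this
  rw [Polynomial.natDegree_eq_zero_of_isUnit hfu] at hf
  exact lt_irrefl _ hf

lemma tripleBezout {k : Type*} [Field k] {A B C f : Polynomial k}
    (hid : C ^ 2 = A ^ 3 + f * B ^ 6) (hCB : IsCoprime C B)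
    (hsf : Squarefree f) (hfne : f ≠ 0) :
    ∃ P Q R : Polynomial k, P * A + Q * C + R * f = 1 := by
  classical
  set D := EuclideanDomain.gcd A C with hD
  have hcop : IsCoprime D f := by
    rw [← EuclideanDomain.gcd_isUnit_iff]
    by_contra hu
    have hG0 : EuclideanDomain.gcd D f ≠ 0 := fun h => hfne (EuclideanDomain.gcd_eq_zero_iff.1 h).2
    obtain ⟨π, hπirr, hπdvd⟩ := WfDvdMonoid.exists_irreducible_factor hu hG0
    have hπD : π ∣ D := hπdvd.trans (EuclideanDomain.gcd_dvd_left _ _)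
    have hπf : π ∣ f := hπdvd.trans (EuclideanDomain.gcd_dvd_right _ _)
    have hπA : π ∣ A := hπD.trans (EuclideanDomain.gcd_dvd_left _ _)
    have hπC : π ∣ C := hπD.trans (EuclideanDomain.gcd_dvd_right _ _)
    have hπB : ¬ π ∣ B := fun hdvd => hπirr.not_isUnit (hCB.isUnit_of_dvd' hπC hdvd)
    have h2 : π ^ 2 ∣ f * B ^ 6 := by
      have h3 : π ^ 2 ∣ C ^ 2 - A ^ 3 := dvd_sub (pow_dvd_pow_of_dvd hπC 2)
        ((pow_dvd_pow_of_dvd hπA 2).trans (pow_dvd_pow A (by norm_num)))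
      rwa [hid, add_sub_cancel_left] at h3
    have h3 : π ^ 2 ∣ f :=
      (((hπirr.coprime_iff_not_dvd).2 hπB).pow).dvd_of_dvd_mul_right h2
    rw [pow_two] at h3
    exact hπirr.not_isUnit (hsf π h3)
  obtain ⟨u, w, huw⟩ := hcop
  refine ⟨u * EuclideanDomain.gcdA A C, u * EuclideanDomain.gcdB A C, w, ?_⟩
  have hab := EuclideanDomain.gcd_eq_gcd_ab A C
  rw [← hD] at hab
  linear_combination huw - u * hab

lemma reflect_one_eq {k : Type*} [Field k] (m : ℕ) :
    Polynomial.reflect m (1 : Polynomial k) = Polynomial.X ^ m := by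
  have h := Polynomial.reflect_monomial m 0 (R := k)
  simp only [pow_zero] at h
  rw [h, Polynomial.revAt_le (Nat.zero_le m)]
  simp

lemma reflect_shift {k : Type*} [Field k] (P : Polynomial k) {N : ℕ} (hN : P.natDegree ≤ N)
    (m : ℕ) : Polynomial.X ^ m * Polynomial.reflect N P = Polynomial.reflect (N + m) P := by
  have h := Polynomial.reflect_mul P (1 : Polynomial k) hN
    (by simp : (1 : Polynomial k).natDegree ≤ m)
  rw [mul_one] at h
  rw [h, reflect_one_eq, mul_comm]






lemma unit_lemma {k : Type*} [Field k] [NumberField k] (U : Finset k) (hU : ∀ x ∈ U, x ≠ 0) :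
    ∃ S : Finset (HeightOneSpectrum (𝓞 k)),
      ∀ (L : Type) [Field L] [NumberField L] [Algebra k L],
      ∀ q : HeightOneSpectrum (𝓞 L),
        (∀ p ∈ S, Ideal.comap (algebraMap (𝓞 k) (𝓞 L)) q.asIdeal ≠ p.asIdeal) →
        ∀ x ∈ U, q.valuation L (algebraMap k L x) = 1 := by
  classical
  choose nm dn hdn hfr using fun x : k => IsFractionRing.div_surjective (A := 𝓞 k) x
  have hnm0 : ∀ x : k, x ≠ 0 → nm x ≠ 0 := by
    intro x hx h0
    apply hx
    rw [← hfr x, h0, map_zero, zero_div]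
  have hdn0 : ∀ x : k, dn x ≠ 0 := fun x => nonZeroDivisors.ne_zero (hdn x)
  set SS : Set (HeightOneSpectrum (𝓞 k)) :=
    {p | ∃ x ∈ U, nm x ∈ p.asIdeal ∨ dn x ∈ p.asIdeal} with hSS
  have hfin : SS.Finite := by
    have hsub : SS ⊆ ⋃ x ∈ (U : Set k),
        ({p : HeightOneSpectrum (𝓞 k) | p.asIdeal ∣ Ideal.span {nm x}}
          ∪ {p : HeightOneSpectrum (𝓞 k) | p.asIdeal ∣ Ideal.span {dn x}}) := by
      rintro p ⟨x, hxU, h | h⟩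
      · exact Set.mem_biUnion hxU (Or.inl (Ideal.dvd_span_singleton.2 h))
      · exact Set.mem_biUnion hxU (Or.inr (Ideal.dvd_span_singleton.2 h))
    refine Set.Finite.subset (Set.Finite.biUnion U.finite_toSet (fun x hx => ?_)) hsub
    refine (Ideal.finite_factors ?_).union (Ideal.finite_factors ?_)
    · simpa [Ne, Ideal.span_singleton_eq_bot] using hnm0 x (hU x hx)
    · simpa [Ne, Ideal.span_singleton_eq_bot] using hdn0 x
  refine ⟨hfin.toFinset, ?_⟩
  intro L _ _ _ q hq x hxU
  have hcomap_ne : Ideal.comap (algebraMap (𝓞 k) (𝓞 L)) q.asIdeal ≠ ⊥ := by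
    intro h
    exact q.ne_bot (Ideal.eq_bot_of_comap_eq_bot h)
  set pk : HeightOneSpectrum (𝓞 k) :=
    ⟨Ideal.comap (algebraMap (𝓞 k) (𝓞 L)) q.asIdeal, Ideal.IsPrime.comap _, hcomap_ne⟩ with hpk
  have hpkS : pk ∉ SS := fun hmem => hq pk (hfin.mem_toFinset.2 hmem) rfl
  have key : ∀ c : 𝓞 k, c ∉ pk.asIdeal →
      q.valuation L (algebraMap k L (algebraMap (𝓞 k) k c)) = 1 := by
    intro c hc
    have h1 : algebraMap k L (algebraMap (𝓞 k) k c)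
        = algebraMap (𝓞 L) L (algebraMap (𝓞 k) (𝓞 L) c) := by
      rw [← IsScalarTower.algebraMap_apply, ← IsScalarTower.algebraMap_apply]
    rw [h1, IsDedekindDomain.HeightOneSpectrum.valuation_of_algebraMap]
    refine le_antisymm (q.intValuation_le_one _) ?_
    by_contra hlt
    push_neg at hlt
    rw [IsDedekindDomain.HeightOneSpectrum.intValuation_lt_one_iff_dvd,
      Ideal.dvd_span_singleton] at hlt
    exact hc (Ideal.mem_comap.2 hlt)
  have hnmin : nm x ∉ pk.asIdeal := fun h => hpkS ⟨x, hxU, Or.inl h⟩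
  have hdnin : dn x ∉ pk.asIdeal := fun h => hpkS ⟨x, hxU, Or.inr h⟩
  rw [← hfr x, map_div₀, map_div₀, key _ hnmin, key _ hdnin]
  norm_num






lemma reflect_one_eq' {k : Type*} [Field k] (m : ℕ) :
    Polynomial.reflect m (1 : Polynomial k) = Polynomial.X ^ m := by
  have h := Polynomial.reflect_monomial m 0 (R := k)
  simp only [pow_zero] at h
  rw [h, Polynomial.revAt_le (Nat.zero_le m)]
  simp

lemma reflect_shift' {k : Type*} [Field k] (P : Polynomial k) {N : ℕ} (hN : P.natDegree ≤ N)
    (m : ℕ) : Polynomial.X ^ m * Polynomial.reflect N P = Polynomial.reflect (N + m) P := by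
  have h := Polynomial.reflect_mul P (1 : Polynomial k) hN
    (by simp : (1 : Polynomial k).natDegree ≤ m)
  rw [mul_one] at h
  rw [h, reflect_one_eq', mul_comm]

lemma star_identity {k : Type*} [Field k] {A B C f : Polynomial k}
    (hid : C ^ 2 = A ^ 3 + f * B ^ 6) {J e : ℕ}
    (hA : A.natDegree ≤ 2 * J) (hC : C.natDegree ≤ 3 * J)
    (he : f.natDegree + 6 * B.natDegree + e = 6 * J) :
    (Polynomial.reflect (3 * J) C) ^ 2
      = (Polynomial.reflect (2 * J) A) ^ 3
        + Polynomial.X ^ e * (Polynomial.reflect f.natDegree f * (Polynomial.reverse B) ^ 6) := by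
  set dB := B.natDegree with hdB
  have hBB : (B * B).natDegree ≤ dB + dB := Polynomial.natDegree_mul_le
  have hAA : (A * A).natDegree ≤ 2 * J + 2 * J := Polynomial.natDegree_mul_le.trans
    (add_le_add hA hA)
  have rB2 : Polynomial.reflect (dB + dB) (B * B) = Polynomial.reverse B * Polynomial.reverse B :=
    Polynomial.reflect_mul B B le_rfl le_rfl
  have rB4 : Polynomial.reflect ((dB + dB) + (dB + dB)) ((B * B) * (B * B))
      = Polynomial.reflect (dB + dB) (B * B) * Polynomial.reflect (dB + dB) (B * B) :=
    Polynomial.reflect_mul _ _ hBB hBB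
  have rB6 : Polynomial.reflect ((dB + dB) + ((dB + dB) + (dB + dB))) ((B * B) * ((B * B) * (B * B)))
      = Polynomial.reflect (dB + dB) (B * B)
        * Polynomial.reflect ((dB + dB) + (dB + dB)) ((B * B) * (B * B)) :=
    Polynomial.reflect_mul _ _ hBB (Polynomial.natDegree_mul_le.trans (add_le_add hBB hBB))
  have hB6deg : (B ^ 6).natDegree ≤ 6 * dB := by
    rw [Polynomial.natDegree_pow]
  have rfB : Polynomial.reflect (f.natDegree + 6 * dB) (f * B ^ 6)
      = Polynomial.reflect f.natDegree f * Polynomial.reflect (6 * dB) (B ^ 6) :=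
    Polynomial.reflect_mul _ _ le_rfl hB6deg
  have rB6' : Polynomial.reflect (6 * dB) (B ^ 6) = (Polynomial.reverse B) ^ 6 := by
    have h1 : (B : Polynomial k) ^ 6 = (B * B) * ((B * B) * (B * B)) := by ring
    have h2 : 6 * dB = (dB + dB) + ((dB + dB) + (dB + dB)) := by ring
    rw [h1, h2, rB6, rB4, rB2]
    ring
  have rC : (Polynomial.reflect (3 * J) C) ^ 2 = Polynomial.reflect (6 * J) (C ^ 2) := by
    have h1 : (C : Polynomial k) ^ 2 = C * C := by ring
    have h2 : 6 * J = 3 * J + 3 * J := by ring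
    rw [h1, h2, Polynomial.reflect_mul C C hC hC]
    ring
  have rA : (Polynomial.reflect (2 * J) A) ^ 3 = Polynomial.reflect (6 * J) (A ^ 3) := by
    have h1 : (A : Polynomial k) ^ 3 = A * (A * A) := by ring
    have h2 : 6 * J = 2 * J + (2 * J + 2 * J) := by ring
    rw [h1, h2, Polynomial.reflect_mul A (A * A) hA hAA, Polynomial.reflect_mul A A hA hA]
    ring
  have rX : Polynomial.X ^ e * (Polynomial.reflect f.natDegree f * (Polynomial.reverse B) ^ 6)
      = Polynomial.reflect (6 * J) (f * B ^ 6) := by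
    rw [← rB6', ← rfB, reflect_shift' _ (Polynomial.natDegree_mul_le.trans
      (by omega : (f.natDegree + (B ^ 6).natDegree) ≤ f.natDegree + 6 * dB)) e]
    rw [show f.natDegree + 6 * dB + e = 6 * J from he]
  rw [rC, rA, rX, hid, Polynomial.reflect_add]


end Scube


open Scube

/- Theorem 3.1 (Scube): `k` a number field, `f ∈ k[t]` nonconstant squarefree with `deg f` odd
or divisible by `6`, and `(X₀, Y₀) ∈ E(k(t))` a point of `E : Y² = X³ + f(t)`.  There is a
finite set `S` of (finite) places of `k` such that for every `t ∈ k` (at which `Y₀` is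
defined) and every square root `y_t` of `f(t)`, generating the field `L = k(y_t)`, the
fractional `O_{L,S}`-ideal `(y_t - Y₀(t))` is a cube: equivalently, `3 ∣ ord_q (y_t - Y₀(t))`
for every prime `q` of `L` not lying above a prime of `S` (the archimedean places impose no
condition on ideals). -/
theorem stmt0 (k : Type*) [Field k] [NumberField k]
    (f : Polynomial k) (hf : 0 < f.natDegree) (hsf : Squarefree f)
    (hdeg : Odd f.natDegree ∨ 6 ∣ f.natDegree)
    (X₀ Y₀ : RatFunc k)
    (hpt : Y₀ ^ 2 = X₀ ^ 3 + algebraMap (Polynomial k) (RatFunc k) f) :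
    ∃ S : Finset (HeightOneSpectrum (𝓞 k)),
      ∀ t : k, Y₀.denom.eval t ≠ 0 →
      ∀ (L : Type) [Field L] [NumberField L] [Algebra k L],
      ∀ y : L, y ^ 2 = algebraMap k L (f.eval t) →
        Algebra.adjoin k {y} = ⊤ →
      ∀ q : HeightOneSpectrum (𝓞 L),
        (∀ p ∈ S, Ideal.comap (algebraMap (𝓞 k) (𝓞 L)) q.asIdeal ≠ p.asIdeal) →
        (y - algebraMap k L (Y₀.eval (RingHom.id k) t) = 0 ∨
          ∃ n : ℤ, 3 ∣ n ∧
            q.valuation L (y - algebraMap k L (Y₀.eval (RingHom.id k) t))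
              = ((Multiplicative.ofAdd n : Multiplicative ℤ) : WithZero (Multiplicative ℤ))) := by
  classical
  obtain ⟨A, B, Cp, hBne, hnum, hden, hAB, hCB, hid⟩ := stepA f X₀ Y₀ hpt
  have hfne : f ≠ 0 := fun h => by simp [h] at hf
  have hCne : Cp ≠ 0 := C_ne_zero hid hAB hsf hf
  obtain ⟨σ₁, τ₁, hστ⟩ := hCB
  obtain ⟨P₁, Q₁, R₁, hPQR⟩ := tripleBezout hid ⟨σ₁, τ₁, hστ⟩ hsf hfne
  set dd := f.natDegree with hdd
  set dB := B.natDegree with hdB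
  set dC := Cp.natDegree with hdC
  set J := A.natDegree + dB + dC + dd with hJ
  have hAJ : A.natDegree ≤ 2 * J := by omega
  have hCJ : dC ≤ 3 * J := by omega
  have heJ : dd + 6 * dB ≤ 6 * J := by omega
  set e := 6 * J - 6 * dB - dd with he
  have hee : dd + 6 * dB + e = 6 * J := by omega
  set cc := 3 * J - dC with hcc
  have hcce : cc + dC = 3 * J := by omega
  set fst := Polynomial.reflect dd f with hfst
  set Ast := Polynomial.reflect (2 * J) A with hAst
  set Cst := Polynomial.reflect (3 * J) Cp with hCst
  set Bst := Polynomial.reverse B with hBst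
  have hstar : Cst ^ 2 = Ast ^ 3 + Polynomial.X ^ e * (fst * Bst ^ 6) :=
    star_identity hid hAJ hCJ hee
  have hCstX : Cst = Polynomial.X ^ cc * Polynomial.reverse Cp := by
    rw [hCst, Polynomial.reverse, reflect_shift' Cp le_rfl cc,
      show Cp.natDegree + cc = 3 * J from by omega]
  set U : Finset k := insert (2 : k) (cfs A ∪ cfs B ∪ cfs Cp ∪ cfs f ∪ cfs σ₁ ∪ cfs τ₁
    ∪ cfs P₁ ∪ cfs Q₁ ∪ cfs R₁) with hUdef
  have hUne : ∀ x ∈ U, x ≠ 0 := by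
    intro x hx
    rw [hUdef, Finset.mem_insert] at hx
    rcases hx with rfl | hx
    · exact two_ne_zero
    · simp only [Finset.mem_union] at hx
      rcases hx with ((((((((h|h)|h)|h)|h)|h)|h)|h)|h) <;>
        · rw [cfs] at h
          obtain ⟨i, hi, rfl⟩ := Finset.mem_image.1 h
          exact Polynomial.mem_support_iff.1 hi
  obtain ⟨S, hS⟩ := unit_lemma U hUne
  have hsubA : cfs A ⊆ U := by intro x hx; rw [hUdef]; simp [hx]
  have hsubB : cfs B ⊆ U := by intro x hx; rw [hUdef]; simp [hx]
  have hsubC : cfs Cp ⊆ U := by intro x hx; rw [hUdef]; simp [hx]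
  have hsubf : cfs f ⊆ U := by intro x hx; rw [hUdef]; simp [hx]
  have hsubσ : cfs σ₁ ⊆ U := by intro x hx; rw [hUdef]; simp [hx]
  have hsubτ : cfs τ₁ ⊆ U := by intro x hx; rw [hUdef]; simp [hx]
  have hsubP : cfs P₁ ⊆ U := by intro x hx; rw [hUdef]; simp [hx]
  have hsubQ : cfs Q₁ ⊆ U := by intro x hx; rw [hUdef]; simp [hx]
  have hsubR : cfs R₁ ⊆ U := by intro x hx; rw [hUdef]; simp [hx]
  refine ⟨S, ?_⟩
  intro t ht L _ _ _ y hy _adj q hq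
  have hunit : ∀ x ∈ U, q.valuation L (algebraMap k L x) = 1 := hS L q hq
  set ι := algebraMap k L with hι
  set v : Valuation L (WithZero (Multiplicative ℤ)) := q.valuation L with hvdef
  have hgood : ∀ P : Polynomial k, cfs P ⊆ U → ∀ i, P.coeff i ≠ 0 → v (ι (P.coeff i)) = 1 :=
    fun P hP i hi => hunit _ (hP (mem_cfs hi))
  have hv2' : v (2 : L) = 1 := by
    have h := hunit _ (Finset.mem_insert_self (2 : k) _)
    rwa [show ι (2 : k) = (2 : L) from map_ofNat ι 2] at h
  have hBt0 : B.eval t ≠ 0 := by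
    intro h
    apply ht
    rw [hden, Polynomial.eval_pow, h]
    norm_num
  set Bt := ι (B.eval t) with hBtdef
  set Ct := ι (Cp.eval t) with hCtdef
  set At := ι (A.eval t) with hAtdef
  set ft := ι (f.eval t) with hftdef
  have hBtne : Bt ≠ 0 := by
    rw [hBtdef]
    exact fun h0 => hBt0 ((_root_.map_eq_zero ι).1 h0)
  set Γ : L := Bt ^ 3 * y - Ct with hΓdef
  set Γ' : L := Bt ^ 3 * y + Ct with hΓ'def
  have hval : Ct ^ 2 = At ^ 3 + ft * Bt ^ 6 := by
    have h := congrArg (fun P => ι (Polynomial.eval t P)) hid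
    simpa only [Polynomial.eval_pow, Polynomial.eval_mul, Polynomial.eval_add,
      map_add, map_mul, map_pow] using h
  have hprod : Γ * Γ' = - At ^ 3 := by
    rw [hΓdef, hΓ'def]
    linear_combination Bt ^ 6 * hy - hval
  have hYeval : ι (Y₀.eval (RingHom.id k) t) = Ct / Bt ^ 3 := by
    rw [RatFunc.eval, hnum, hden, Polynomial.eval₂_eq_eval_map, Polynomial.eval₂_eq_eval_map,
      Polynomial.map_id, Polynomial.map_id, map_div₀, Polynomial.eval_pow, map_pow]
  have hηΓ : y - ι (Y₀.eval (RingHom.id k) t) = Γ / Bt ^ 3 := by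
    rw [hYeval, hΓdef]
    field_simp
  have hfinal : (Γ = 0 ∨ ∃ m : ℤ, 3 ∣ m ∧ v Γ
        = ((Multiplicative.ofAdd m : Multiplicative ℤ) : WithZero (Multiplicative ℤ))) →
      (y - ι (Y₀.eval (RingHom.id k) t) = 0 ∨
        ∃ n : ℤ, 3 ∣ n ∧ v (y - ι (Y₀.eval (RingHom.id k) t))
          = ((Multiplicative.ofAdd n : Multiplicative ℤ) : WithZero (Multiplicative ℤ))) := by
    rintro (h0 | ⟨m, hm3, hmv⟩)
    · left; rw [hηΓ, h0, zero_div]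
    · right
      obtain ⟨mb, hmb⟩ := zm_exists ((v.ne_zero_iff).2 hBtne)
      refine ⟨m - 3 * mb, by omega, ?_⟩
      rw [hηΓ, map_div₀, hmv, v.map_pow, hmb, zm_pow, zm_div]
      norm_num
  apply hfinal
  rcases le_or_gt (v (ι t)) 1 with hcase | hcase
  · -- CASE 1 : t is integral at q
    have hEt : ∀ P : Polynomial k, ι (P.eval t) = P.eval₂ ι (ι t) :=
      fun P => (Polynomial.eval₂_at_apply ι t).symm
    have hvB : v Bt ≤ 1 := by
      rw [hBtdef, hEt]; exact val_eval₂_le_one v ι (hgood B hsubB) hcase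
    have hvC : v Ct ≤ 1 := by
      rw [hCtdef, hEt]; exact val_eval₂_le_one v ι (hgood Cp hsubC) hcase
    have hvA : v At ≤ 1 := by
      rw [hAtdef, hEt]; exact val_eval₂_le_one v ι (hgood A hsubA) hcase
    have hvf : v ft ≤ 1 := by
      rw [hftdef, hEt]; exact val_eval₂_le_one v ι (hgood f hsubf) hcase
    have hvy : v y ≤ 1 := by
      refine sq_le_one ?_
      have hyy : y * y = ft := by rw [← hy]; ring
      rw [← v.map_mul, hyy]
      exact hvf
    have hvBy : v (Bt ^ 3 * y) ≤ 1 := by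
      rw [v.map_mul, v.map_pow]
      exact mul_le_one' (pow_le_one' hvB 3) hvy
    have hvΓ : v Γ ≤ 1 := by
      rw [hΓdef]; exact v.map_sub_le hvBy hvC
    have hvΓ' : v Γ' ≤ 1 := by
      rw [hΓ'def]; exact v.map_add_le hvBy hvC
    have hnotboth : ¬ (v Γ < 1 ∧ v Γ' < 1) := by
      rintro ⟨h1, h2⟩
      have hsum : v (Bt ^ 3 * y) < 1 := by
        have hΓΓ' : Γ + Γ' = 2 * (Bt ^ 3 * y) := by rw [hΓdef, hΓ'def]; ring
        have h3 : v (Γ + Γ') < 1 := (v.map_add _ _).trans_lt (max_lt h1 h2)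
        rwa [hΓΓ', v.map_mul, hv2', one_mul] at h3
      have hCtlt : v Ct < 1 := by
        have hdiff : Γ' - Γ = 2 * Ct := by rw [hΓdef, hΓ'def]; ring
        have h3 : v (Γ' - Γ) < 1 := (v.map_sub _ _).trans_lt (max_lt h2 h1)
        rwa [hdiff, v.map_mul, hv2', one_mul] at h3
      have hBy : v Bt < 1 ∨ v y < 1 := by
        rw [v.map_mul, v.map_pow] at hsum
        rcases lt_one_or (pow_le_one' hvB 3) hvy hsum with h | h
        · exact Or.inl (cube_lt_one hvB h)
        · exact Or.inr h
      rcases hBy with hBlt | hylt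
      · have h1' : (1 : L) = ι (σ₁.eval t) * Ct + ι (τ₁.eval t) * Bt := by
          have h := congrArg (fun P => ι (P.eval t)) hστ
          simpa only [Polynomial.eval_add, Polynomial.eval_mul, map_add, map_mul,
            Polynomial.eval_one, map_one] using h.symm
        have hcontra : (1 : WithZero (Multiplicative ℤ)) < 1 := by
          calc (1 : WithZero (Multiplicative ℤ)) = v (1 : L) := (v.map_one).symm
            _ = v (ι (σ₁.eval t) * Ct + ι (τ₁.eval t) * Bt) := by rw [← h1']
            _ ≤ max (v (ι (σ₁.eval t) * Ct)) (v (ι (τ₁.eval t) * Bt)) := v.map_add _ _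
            _ < 1 := by
                refine max_lt ?_ ?_
                · rw [v.map_mul]
                  calc v (ι (σ₁.eval t)) * v Ct ≤ 1 * v Ct := by
                        refine mul_le_mul_left ?_ _
                        rw [hEt]; exact val_eval₂_le_one v ι (hgood σ₁ hsubσ) hcase
                    _ = v Ct := one_mul _
                    _ < 1 := hCtlt
                · rw [v.map_mul]
                  calc v (ι (τ₁.eval t)) * v Bt ≤ 1 * v Bt := by
                        refine mul_le_mul_left ?_ _
                        rw [hEt]; exact val_eval₂_le_one v ι (hgood τ₁ hsubτ) hcase
                    _ = v Bt := one_mul _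
                    _ < 1 := hBlt
        exact absurd hcontra (lt_irrefl _)
      · have hft : v ft < 1 := by
          have hyy : y * y = ft := by rw [← hy]; ring
          calc v ft = v y * v y := by rw [← v.map_mul, hyy]
            _ ≤ v y * 1 := mul_le_mul_right hvy _
            _ = v y := mul_one _
            _ < 1 := hylt
        have hAt3 : v (At ^ 3) < 1 := by
          have hA3 : At ^ 3 = Ct ^ 2 - ft * Bt ^ 6 := by linear_combination - hval
          rw [hA3]
          refine (v.map_sub _ _).trans_lt (max_lt ?_ ?_)
          · rw [v.map_pow]
            calc (v Ct) ^ 2 = v Ct * v Ct := sq (v Ct)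
              _ ≤ 1 * v Ct := mul_le_mul_left hvC _
              _ = v Ct := one_mul _
              _ < 1 := hCtlt
          · rw [v.map_mul, v.map_pow]
            calc v ft * (v Bt) ^ 6 ≤ v ft * 1 := mul_le_mul_right (pow_le_one' hvB 6) _
              _ = v ft := mul_one _
              _ < 1 := hft
        have hAtlt : v At < 1 := cube_lt_one hvA (by rwa [v.map_pow] at hAt3)
        have h1' : (1 : L) = ι (P₁.eval t) * At + ι (Q₁.eval t) * Ct + ι (R₁.eval t) * ft := by
          have h := congrArg (fun P => ι (P.eval t)) hPQR
          simpa only [Polynomial.eval_add, Polynomial.eval_mul, map_add, map_mul,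
            Polynomial.eval_one, map_one] using h.symm
        have hcontra : (1 : WithZero (Multiplicative ℤ)) < 1 := by
          calc (1 : WithZero (Multiplicative ℤ)) = v (1 : L) := (v.map_one).symm
            _ = v (ι (P₁.eval t) * At + ι (Q₁.eval t) * Ct + ι (R₁.eval t) * ft) := by rw [← h1']
            _ ≤ max (max (v (ι (P₁.eval t) * At)) (v (ι (Q₁.eval t) * Ct)))
                (v (ι (R₁.eval t) * ft)) := (v.map_add _ _).trans (max_le_max (v.map_add _ _) le_rfl)
            _ < 1 := by
                refine max_lt (max_lt ?_ ?_) ?_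
                · rw [v.map_mul]
                  calc v (ι (P₁.eval t)) * v At ≤ 1 * v At := by
                        refine mul_le_mul_left ?_ _
                        rw [hEt]; exact val_eval₂_le_one v ι (hgood P₁ hsubP) hcase
                    _ = v At := one_mul _
                    _ < 1 := hAtlt
                · rw [v.map_mul]
                  calc v (ι (Q₁.eval t)) * v Ct ≤ 1 * v Ct := by
                        refine mul_le_mul_left ?_ _
                        rw [hEt]; exact val_eval₂_le_one v ι (hgood Q₁ hsubQ) hcase
                    _ = v Ct := one_mul _
                    _ < 1 := hCtlt
                · rw [v.map_mul]
                  calc v (ι (R₁.eval t)) * v ft ≤ 1 * v ft := by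
                        refine mul_le_mul_left ?_ _
                        rw [hEt]; exact val_eval₂_le_one v ι (hgood R₁ hsubR) hcase
                    _ = v ft := one_mul _
                    _ < 1 := hft
        exact absurd hcontra (lt_irrefl _)
    have hor : v Γ = 1 ∨ v Γ' = 1 := by
      by_contra hc
      push_neg at hc
      exact hnotboth ⟨hvΓ.lt_of_ne hc.1, hvΓ'.lt_of_ne hc.2⟩
    by_cases hΓ0 : Γ = 0
    · exact Or.inl hΓ0
    rcases hor with h | h
    · refine Or.inr ⟨0, by norm_num, ?_⟩
      rw [h]
      norm_num
    · have hΓ'ne : Γ' ≠ 0 := by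
        intro h0
        rw [h0, v.map_zero] at h
        exact zero_ne_one h
      have hAtne : At ≠ 0 := by
        intro h0
        have hzero : Γ * Γ' = 0 := by rw [hprod, h0]; ring
        rcases mul_eq_zero.1 hzero with h1 | h1
        · exact hΓ0 h1
        · exact hΓ'ne h1
      obtain ⟨a, ha⟩ := zm_exists ((v.ne_zero_iff).2 hAtne)
      refine Or.inr ⟨3 * a, ⟨a, rfl⟩, ?_⟩
      have hmulv : v Γ * v Γ' = (v At) ^ 3 := by
        rw [← v.map_mul, hprod, v.map_neg, v.map_pow]
      rw [h, mul_one] at hmulv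
      rw [hmulv, ha, zm_pow]
      norm_num
  · -- CASE 2 : t has a pole at q
    have hιtne : ι t ≠ 0 := by
      intro h0
      rw [h0, v.map_zero] at hcase
      exact absurd hcase (not_lt.2 zero_le_one)
    have htne : t ≠ 0 := fun h0 => hιtne (by rw [h0, map_zero])
    set z : L := ι t⁻¹ with hzdef
    have hz1 : z * ι t = 1 := by rw [hzdef, ← map_mul, inv_mul_cancel₀ htne, map_one]
    have hzne : z ≠ 0 := left_ne_zero_of_mul_eq_one hz1
    have hvzlt : v z < 1 := by
      by_contra hge
      push_neg at hge
      have hle : v (ι t) ≤ 1 := by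
        calc v (ι t) = 1 * v (ι t) := (one_mul _).symm
          _ ≤ v z * v (ι t) := mul_le_mul_left hge _
          _ = 1 := by rw [← v.map_mul, hz1, v.map_one]
      exact absurd hcase (not_lt.2 hle)
    have hvzne : v z ≠ 0 := (v.ne_zero_iff).2 hzne
    obtain ⟨sz, hsz⟩ := zm_exists hvzne
    set az := Ast.eval₂ ι z with hazdef
    set bz := Bst.eval₂ ι z with hbzdef
    set czv := Cst.eval₂ ι z with hczdef
    set fz := fst.eval₂ ι z with hfzdef
    letI : Invertible (ι t) := invertibleOfNonzero hιtne
    have hinv : ⅟ (ι t) = z := by rw [invOf_eq_inv, hzdef, map_inv₀]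
    have EB : bz * (ι t) ^ dB = Bt := by
      have h := Polynomial.eval₂_reflect_mul_pow ι (ι t) dB B le_rfl
      rw [hinv] at h
      rw [hbzdef, hBst, Polynomial.reverse, hBtdef, ← Polynomial.eval₂_at_apply]
      exact h
    have EC : czv * (ι t) ^ (3 * J) = Ct := by
      have h := Polynomial.eval₂_reflect_mul_pow ι (ι t) (3 * J) Cp hCJ
      rw [hinv] at h
      rw [hczdef, hCst, hCtdef, ← Polynomial.eval₂_at_apply]
      exact h
    have Ef : fz * (ι t) ^ dd = ft := by
      have h := Polynomial.eval₂_reflect_mul_pow ι (ι t) dd f le_rfl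
      rw [hinv] at h
      rw [hfzdef, hfst, hftdef, ← Polynomial.eval₂_at_apply]
      exact h
    set JJ := 3 * J - 3 * dB with hJJ
    have hJJ3 : 3 * dB + JJ = 3 * J := by omega
    have hJJe : 2 * JJ = e + dd := by omega
    set yt : L := z ^ JJ * y with hytdef
    set Pz : L := bz ^ 3 * yt with hPzdef
    set Γ₂ : L := Pz - czv with hΓ₂def
    set Γ₂' : L := Pz + czv with hΓ₂'def
    have hpowone : ∀ n : ℕ, (ι t) ^ n * z ^ n = 1 := by
      intro n
      rw [← mul_pow, mul_comm (ι t) z, hz1, one_pow]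
    have hbzBt : bz = Bt * z ^ dB := by
      calc bz = bz * ((ι t) ^ dB * z ^ dB) := by rw [hpowone, mul_one]
        _ = (bz * (ι t) ^ dB) * z ^ dB := by ring
        _ = Bt * z ^ dB := by rw [EB]
    have hczCt : czv = Ct * z ^ (3 * J) := by
      calc czv = czv * ((ι t) ^ (3 * J) * z ^ (3 * J)) := by rw [hpowone, mul_one]
        _ = (czv * (ι t) ^ (3 * J)) * z ^ (3 * J) := by ring
        _ = Ct * z ^ (3 * J) := by rw [EC]
    have hΓ₂Γ : Γ₂ = z ^ (3 * J) * Γ := by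
      rw [hΓ₂def, hPzdef, hbzBt, hczCt, hytdef, hΓdef,
        show (3 : ℕ) * J = 3 * dB + JJ from by omega, pow_add]
      ring
    have hΓ0iff : Γ₂ = 0 ↔ Γ = 0 := by
      rw [hΓ₂Γ]
      constructor
      · intro h
        rcases mul_eq_zero.1 h with h1 | h1
        · exact absurd h1 (pow_ne_zero _ hzne)
        · exact h1
      · intro h; rw [h, mul_zero]
    have hstz : czv ^ 2 = az ^ 3 + z ^ e * (fz * bz ^ 6) := by
      have h := congrArg (fun P => Polynomial.eval₂ ι z P) hstar
      simpa only [Polynomial.eval₂_add, Polynomial.eval₂_mul, Polynomial.eval₂_pow,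
        Polynomial.eval₂_X_pow, Polynomial.eval₂_X] using h
    have hyt2 : yt ^ 2 = z ^ e * fz := by
      have hfzft : fz = ft * z ^ dd := by
        calc fz = fz * ((ι t) ^ dd * z ^ dd) := by rw [hpowone, mul_one]
          _ = (fz * (ι t) ^ dd) * z ^ dd := by ring
          _ = ft * z ^ dd := by rw [Ef]
      calc yt ^ 2 = z ^ (2 * JJ) * y ^ 2 := by rw [hytdef]; ring
        _ = z ^ (e + dd) * ft := by rw [hy, hJJe]
        _ = z ^ e * (ft * z ^ dd) := by rw [pow_add]; ring
        _ = z ^ e * fz := by rw [hfzft]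
    have hsubBst : cfs Bst ⊆ U := (cfs_reflect_subset _ _).trans hsubB
    have hsubfst : cfs fst ⊆ U := (cfs_reflect_subset _ _).trans hsubf
    have hsubCrev : cfs (Polynomial.reverse Cp) ⊆ U := (cfs_reflect_subset _ _).trans hsubC
    have hsubAst : cfs Ast ⊆ U := (cfs_reflect_subset _ _).trans hsubA
    have hvbz : v bz = 1 := by
      rw [hbzdef]
      refine val_eval₂_eq_one v ι (hgood _ hsubBst) ?_ hvzlt
      apply hgood _ hsubBst
      rw [hBst, Polynomial.coeff_zero_reverse]
      exact Polynomial.leadingCoeff_ne_zero.2 hBne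
    have hvfz : v fz = 1 := by
      rw [hfzdef]
      refine val_eval₂_eq_one v ι (hgood _ hsubfst) ?_ hvzlt
      apply hgood _ hsubfst
      rw [hfst, Polynomial.coeff_reflect, Polynomial.revAt_le (Nat.zero_le dd), Nat.sub_zero]
      exact Polynomial.leadingCoeff_ne_zero.2 hfne
    have hvcz : v czv = (v z) ^ cc := by
      rw [hczdef, hCstX, Polynomial.eval₂_mul, Polynomial.eval₂_X_pow, v.map_mul, v.map_pow]
      have hone : v (Polynomial.eval₂ ι z (Polynomial.reverse Cp)) = 1 := by
        refine val_eval₂_eq_one v ι (hgood _ hsubCrev) ?_ hvzlt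
        apply hgood _ hsubCrev
        rw [Polynomial.coeff_zero_reverse]
        exact Polynomial.leadingCoeff_ne_zero.2 hCne
      rw [hone, mul_one]
    have hvPz : v Pz = v yt := by
      rw [hPzdef, v.map_mul, v.map_pow, hvbz, one_pow, one_mul]
    have hvyt2 : v yt * v yt = (v z) ^ e := by
      have h : v (yt ^ 2) = v (z ^ e) * v fz := by rw [hyt2, v.map_mul]
      rw [hvfz, mul_one] at h
      calc v yt * v yt = v (yt ^ 2) := by rw [v.map_pow, pow_two]
        _ = v (z ^ e) := h
        _ = (v z) ^ e := v.map_pow _ _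
    have hvczne : v czv ≠ 0 := by rw [hvcz]; exact pow_ne_zero _ hvzne
    have hprod₂ : Γ₂ * Γ₂' = - az ^ 3 := by
      rw [hΓ₂def, hΓ₂'def, hPzdef]
      linear_combination (bz ^ 3) ^ 2 * hyt2 - hstz
    have hvΓofΓ₂ : ∀ m : ℤ, v Γ₂
        = ((Multiplicative.ofAdd m : Multiplicative ℤ) : WithZero (Multiplicative ℤ)) →
        ∃ g : ℤ, v Γ = ((Multiplicative.ofAdd g : Multiplicative ℤ) : WithZero (Multiplicative ℤ))
          ∧ (3 * J : ℤ) * sz + g = m := by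
      intro m hm
      have hΓ₂ne : Γ₂ ≠ 0 := by
        intro h0
        rw [h0, v.map_zero] at hm
        exact zm_ne_zero m hm.symm
      have hΓne : Γ ≠ 0 := fun h0 => hΓ₂ne (hΓ0iff.2 h0)
      obtain ⟨g, hg⟩ := zm_exists ((v.ne_zero_iff).2 hΓne)
      refine ⟨g, hg, ?_⟩
      have hsplit : v Γ₂ = (v z) ^ (3 * J) * v Γ := by rw [hΓ₂Γ, v.map_mul, v.map_pow]
      rw [hm, hsz, hg, zm_pow, zm_mul] at hsplit
      have := zm_inj hsplit
      push_cast at this ⊢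
      omega
    by_cases hPQ : v Pz = v czv
    · -- the balanced case : e = 2 cc, uses the degree hypothesis
      have hvyt : v yt = (v z) ^ cc := by rw [← hvPz, hPQ, hvcz]
      have hecc : (e : ℤ) * sz = ((cc : ℤ) * sz) + ((cc : ℤ) * sz) := by
        have h := hvyt2
        rw [hvyt, hsz, zm_pow, zm_mul, zm_pow] at h
        exact (zm_inj h).symm
      have hszne : sz ≠ 0 := by
        intro h0
        rw [h0] at hsz
        rw [hsz] at hvzlt
        simp at hvzlt
      have hecc' : (e : ℤ) = 2 * (cc : ℤ) := by
        have h : ((e : ℤ) - 2 * cc) * sz = 0 := by linear_combination hecc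
        rcases mul_eq_zero.1 h with h1 | h1
        · linarith
        · exact absurd h1 hszne
      obtain ⟨w, hw⟩ : (3 : ℤ) ∣ (cc : ℤ) := by
        rcases hdeg with ⟨o, ho⟩ | ⟨d6, h6⟩
        · omega
        · omega
      have hvPzeq : v Pz = (v z) ^ cc := by rw [hPQ, hvcz]
      have hvPzne : v Pz ≠ 0 := by rw [hvPzeq]; exact pow_ne_zero _ hvzne
      have hone : v Γ₂ = v Pz ∨ v Γ₂' = v Pz := by
        by_contra hcon
        push_neg at hcon
        have hle1 : v Γ₂ ≤ v Pz := by
          rw [hΓ₂def]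
          exact (v.map_sub _ _).trans (max_le le_rfl (le_of_eq hPQ.symm))
        have hle2 : v Γ₂' ≤ v Pz := by
          rw [hΓ₂'def]
          exact (v.map_add _ _).trans (max_le le_rfl (le_of_eq hPQ.symm))
        have hlt : v (Γ₂ + Γ₂') < v Pz :=
          (v.map_add _ _).trans_lt (max_lt (hle1.lt_of_ne hcon.1) (hle2.lt_of_ne hcon.2))
        have heq2 : Γ₂ + Γ₂' = 2 * Pz := by rw [hΓ₂def, hΓ₂'def]; ring
        rw [heq2, v.map_mul, hv2', one_mul] at hlt
        exact lt_irrefl _ hlt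
      have hPzofAdd : v Pz
          = ((Multiplicative.ofAdd ((cc : ℤ) * sz) : Multiplicative ℤ)
            : WithZero (Multiplicative ℤ)) := by
        rw [hvPzeq, hsz, zm_pow]
      rcases hone with h | h
      · obtain ⟨g, hg, hgeq⟩ := hvΓofΓ₂ _ (h.trans hPzofAdd)
        refine Or.inr ⟨g, ⟨w * sz - (J : ℤ) * sz, by linear_combination hgeq + sz * hw⟩, hg⟩
      · have hΓ₂'ne : Γ₂' ≠ 0 := by
          intro h0
          rw [h0, v.map_zero] at h
          exact hvPzne h.symm
        by_cases hΓ₂0 : Γ₂ = 0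
        · exact Or.inl (hΓ0iff.1 hΓ₂0)
        have hazne : az ≠ 0 := by
          intro h0
          have hzero : Γ₂ * Γ₂' = 0 := by rw [hprod₂, h0]; ring
          rcases mul_eq_zero.1 hzero with h1 | h1
          · exact hΓ₂0 h1
          · exact hΓ₂'ne h1
        obtain ⟨α, hα⟩ := zm_exists ((v.ne_zero_iff).2 hazne)
        obtain ⟨mγ, hmγ⟩ := zm_exists ((v.ne_zero_iff).2 hΓ₂0)
        have hmulv : v Γ₂ * v Γ₂' = (v az) ^ 3 := by
          rw [← v.map_mul, hprod₂, v.map_neg, v.map_pow]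
        rw [hmγ, h, hPzofAdd, hα, zm_pow, zm_mul] at hmulv
        have hmm := zm_inj hmulv
        obtain ⟨g, hg, hgeq⟩ := hvΓofΓ₂ _ hmγ
        refine Or.inr ⟨g, ⟨α - w * sz - (J : ℤ) * sz, by
          linear_combination hgeq + hmm - sz * hw⟩, hg⟩
    · -- the unbalanced case : v Γ₂ = v Γ₂' = max
      have hvytne : v yt ≠ 0 := by
        intro h0
        rw [hvPz] at hPQ
        have := hvyt2
        rw [h0, zero_mul] at this
        exact (pow_ne_zero e hvzne) this.symm
      have hmax : v Γ₂ = max (v Pz) (v czv) ∧ v Γ₂' = max (v Pz) (v czv) := by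
        rcases lt_or_gt_of_ne hPQ with hlt | hlt
        · constructor
          · rw [hΓ₂def, v.map_sub_eq_of_lt_right hlt, max_eq_right hlt.le]
          · rw [hΓ₂'def, v.map_add_eq_of_lt_right hlt, max_eq_right hlt.le]
        · constructor
          · rw [hΓ₂def, v.map_sub_eq_of_lt_left hlt, max_eq_left hlt.le]
          · rw [hΓ₂'def, v.map_add_eq_of_lt_left hlt, max_eq_left hlt.le]
      have hmaxne : max (v Pz) (v czv) ≠ 0 := by
        intro h0
        exact hvczne (le_zero_iff.1 (h0 ▸ le_max_right _ _))
      have hΓ₂ne : Γ₂ ≠ 0 := by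
        intro h0
        rw [h0, v.map_zero] at hmax
        exact hmaxne hmax.1.symm
      have hΓ₂'ne : Γ₂' ≠ 0 := by
        intro h0
        rw [h0, v.map_zero] at hmax
        exact hmaxne hmax.2.symm
      have hazne : az ≠ 0 := by
        intro h0
        have hzero : Γ₂ * Γ₂' = 0 := by rw [hprod₂, h0]; ring
        rcases mul_eq_zero.1 hzero with h1 | h1
        · exact hΓ₂ne h1
        · exact hΓ₂'ne h1
      obtain ⟨α, hα⟩ := zm_exists ((v.ne_zero_iff).2 hazne)
      obtain ⟨mγ, hmγ⟩ := zm_exists ((v.ne_zero_iff).2 hΓ₂ne)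
      have hΓΓ'eq : v Γ₂' = v Γ₂ := hmax.2.trans hmax.1.symm
      have hmulv : v Γ₂ * v Γ₂' = (v az) ^ 3 := by
        rw [← v.map_mul, hprod₂, v.map_neg, v.map_pow]
      rw [hΓΓ'eq, hmγ, hα, zm_pow, zm_mul] at hmulv
      have hmm := zm_inj hmulv
      obtain ⟨m3, hm3⟩ : (3 : ℤ) ∣ mγ := by omega
      obtain ⟨g, hg, hgeq⟩ := hvΓofΓ₂ _ hmγ
      refine Or.inr ⟨g, ⟨m3 - (J : ℤ) * sz, by linear_combination hgeq + hm3⟩, hg⟩
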